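/- Fix reals α∈(0,1), c_TX>0, φ>0, set θ := φ/c_TX, fix λ>0 with √(λθ)<1 and an integer J≥1, and assume 1−α^{J−1}·(1−√(λθ)) < v_th∞(λ) < 1−α^{J}·(1−√(λθ)). Define the per-slot cost c_k := c_TX + φ·(1/√(λθ) − 1/V_k) if V_k > v_th∞(λ) and c_k := 0 otherwise, along the deterministic myopic recursion. Then lim_{T→∞} (1/(T+1))·Σ_{k=0}^{T} c_k = (1/J)·[ c_TX + (φ/√(λθ))·(1−α^{J})·(1−√(λθ)) / (1−α^{J}·(1−√(λθ))) ]. -/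
import Mathlib


/-- The `S_A = ∞` threshold `v_th∞(λ)`. -/
noncomputable def vthinf (th lam : ℝ) : ℝ :=
  Real.sqrt (lam * th) + lam / 2 +
    Real.sqrt lam * Real.sqrt (Real.sqrt (lam * th) + lam / 4)

lemma succ_mod_aux (n J : ℕ) : (n + 1) % J = (n % J + 1) % J := by
  conv_lhs => rw [← Nat.mod_add_div n J]
  rw [Nat.add_right_comm, Nat.add_mul_mod_self_left]

/-- under the stated threshold condition, the time-averaged
sensing-transmission cost along the deterministic myopic recursion converges to
`(1/J)·[c_TX + (φ/√(λθ))·(1−α^J)·(1−√(λθ))/(1−α^J·(1−√(λθ)))]`. -/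
theorem stmt_8 (alpha cTX phi th lam : ℝ) (halpha : alpha ∈ Set.Ioo (0 : ℝ) 1)
    (hcTX : 0 < cTX) (hphi : 0 < phi) (hthdef : th = phi / cTX)
    (hlam : 0 < lam) (hsq : Real.sqrt (lam * th) < 1)
    (J : ℕ) (hJ : 1 ≤ J)
    (hlow : 1 - alpha ^ (J - 1) * (1 - Real.sqrt (lam * th)) < vthinf th lam)
    (hhigh : vthinf th lam < 1 - alpha ^ J * (1 - Real.sqrt (lam * th)))
    (V c : ℕ → ℝ) (hV0 : V 0 = 1)
    (hrec : ∀ k : ℕ, V (k + 1) =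
      1 - alpha * (1 - (if vthinf th lam < V k then Real.sqrt (lam * th) else V k)))
    (hc : ∀ k : ℕ, c k =
      if vthinf th lam < V k then cTX + phi * (1 / Real.sqrt (lam * th) - 1 / V k)
      else 0) :
    Filter.Tendsto
      (fun T : ℕ => (1 / ((T : ℝ) + 1)) * ∑ k ∈ Finset.range (T + 1), c k)
      Filter.atTop
      (nhds ((1 / (J : ℝ)) *
        (cTX + (phi / Real.sqrt (lam * th)) *
          ((1 - alpha ^ J) * (1 - Real.sqrt (lam * th)) /
            (1 - alpha ^ J * (1 - Real.sqrt (lam * th))))))) := by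
  obtain ⟨ha0, ha1⟩ := halpha
  set s := Real.sqrt (lam * th) with hsdef
  set v := vthinf th lam with hvdef
  have hJpos : 0 < J := hJ
  have hth : 0 < th := by rw [hthdef]; positivity
  have hs0 : 0 < s := Real.sqrt_pos.mpr (by positivity)
  have h1s : 0 < 1 - s := by linarith
  have haJ0 : 0 < alpha ^ J := pow_pos ha0 J
  have haJ1 : alpha ^ J < 1 := pow_lt_one₀ ha0.le ha1 (by omega)
  have hv1 : v < 1 := by nlinarith
  -- the key threshold characterization
  have hkey : ∀ j : ℕ, (v < 1 - alpha ^ j * (1 - s)) ↔ J ≤ j := by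
    intro j
    constructor
    · intro h
      by_contra hlt
      push_neg at hlt
      have hj : j ≤ J - 1 := by omega
      have : alpha ^ (J - 1) ≤ alpha ^ j := pow_le_pow_of_le_one ha0.le ha1.le hj
      nlinarith
    · intro h
      have : alpha ^ j ≤ alpha ^ J := pow_le_pow_of_le_one ha0.le ha1.le h
      nlinarith
  -- explicit formula for V
  have hVform : ∀ k : ℕ, V (k + 1) = 1 - alpha ^ (k % J + 1) * (1 - s) := by
    intro k
    induction k with
    | zero =>
      rw [hrec 0, hV0, if_pos (show v < 1 from hv1)]
      simp
    | succ n ih =>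
      have hmodlt : n % J < J := Nat.mod_lt n hJpos
      rw [hrec (n + 1), ih]
      by_cases hd : n % J + 1 = J
      · rw [if_pos ((hkey (n % J + 1)).mpr (by omega))]
        have hm : (n + 1) % J = 0 := by
          rw [succ_mod_aux, hd, Nat.mod_self]
        rw [hm]
        ring
      · have hlt : n % J + 1 < J := by omega
        rw [if_neg (by rw [hkey (n % J + 1)]; omega)]
        have hm : (n + 1) % J = n % J + 1 := by
          rw [succ_mod_aux, Nat.mod_eq_of_lt hlt]
        rw [hm]
        ring
  -- the per-cycle cost
  set D : ℝ := 1 - alpha ^ J * (1 - s) with hDdef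
  have hD0 : 0 < D := by nlinarith
  set ccost : ℝ := cTX + phi * (1 / s - 1 / D) with hccdef
  -- explicit formula for c at positive times
  have hcform : ∀ k : ℕ, c (k + 1) = if (k + 1) % J = 0 then ccost else 0 := by
    intro k
    have hmodlt : k % J < J := Nat.mod_lt k hJpos
    rw [hc (k + 1), hVform k]
    by_cases hd : (k + 1) % J = 0
    · have hJeq : k % J + 1 = J := by
        have h1 : (k % J + 1) % J = 0 := by rw [← succ_mod_aux]; exact hd
        have h2 : J ∣ k % J + 1 := Nat.dvd_of_mod_eq_zero h1
        have h3 : J ≤ k % J + 1 := Nat.le_of_dvd (by omega) h2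
        omega
      rw [if_pos hd, if_pos ((hkey (k % J + 1)).mpr (by omega)), hJeq, hccdef, hDdef]
    · have hne : k % J + 1 ≠ J := by
        intro h
        apply hd
        rw [succ_mod_aux, h, Nat.mod_self]
      rw [if_neg hd, if_neg (by rw [hkey (k % J + 1)]; omega)]
  -- partial-sum formula
  have hsum : ∀ T : ℕ, ∑ k ∈ Finset.range (T + 1), c k
      = c 0 + ccost * ((T / J : ℕ) : ℝ) := by
    intro T
    induction T with
    | zero => simp [Nat.div_eq_of_lt hJpos]
    | succ T ih =>
      rw [Finset.sum_range_succ, ih, hcform T, Nat.succ_div]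
      by_cases hd : J ∣ (T + 1)
      · rw [if_pos hd, if_pos (Nat.eq_zero_of_dvd_of_lt hd |> fun _ => Nat.mod_eq_zero_of_dvd hd)]
        push_cast
        ring
      · rw [if_neg hd, if_neg (fun h => hd (Nat.dvd_of_mod_eq_zero h))]
        push_cast
        ring
  -- identify the limit
  have hs' : s ≠ 0 := ne_of_gt hs0
  have hD' : D ≠ 0 := ne_of_gt hD0
  have hJR : (0 : ℝ) < (J : ℝ) := by exact_mod_cast hJpos
  have hDs : (1 - alpha ^ J) * (1 - s) = D - s := by rw [hDdef]; ring
  have hL : (1 / (J : ℝ)) * (cTX + (phi / s) * ((1 - alpha ^ J) * (1 - s) / D))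
      = ccost / (J : ℝ) := by
    have hfrac : (phi / s) * ((D - s) / D) = phi * (1 / s - 1 / D) := by
      field_simp
    rw [hDs, hfrac, hccdef]
    ring
  rw [hL]
  -- compute the limit
  have h1 : Filter.Tendsto (fun T : ℕ => 1 / ((T : ℝ) + 1)) Filter.atTop (nhds 0) :=
    tendsto_one_div_add_atTop_nhds_zero_nat
  have hg : Filter.Tendsto (fun T : ℕ => (((T % J : ℕ) : ℝ) + 1) / ((T : ℝ) + 1))
      Filter.atTop (nhds 0) := by
    have hb : Filter.Tendsto (fun T : ℕ => (J : ℝ) * (1 / ((T : ℝ) + 1)))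
        Filter.atTop (nhds 0) := by
      have := h1.const_mul (J : ℝ)
      simpa using this
    refine squeeze_zero (fun T => by positivity) (fun T => ?_) hb
    rw [mul_one_div]
    have hTb : ((T % J : ℕ) : ℝ) + 1 ≤ (J : ℝ) := by
      have : T % J + 1 ≤ J := Nat.mod_lt T hJpos
      exact_mod_cast this
    gcongr
  have hmain : Filter.Tendsto
      (fun T : ℕ => c 0 * (1 / ((T : ℝ) + 1))
        + (ccost / (J : ℝ)) * (1 - (((T % J : ℕ) : ℝ) + 1) / ((T : ℝ) + 1)))
      Filter.atTop (nhds (ccost / (J : ℝ))) := by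
    have := (h1.const_mul (c 0)).add
      (((tendsto_const_nhds (x := (1 : ℝ))).sub hg).const_mul (ccost / (J : ℝ)))
    simpa using this
  refine hmain.congr fun T => ?_
  rw [hsum T]
  have hTpos : (0 : ℝ) < (T : ℝ) + 1 := by positivity
  have hcast : ((T / J : ℕ) : ℝ) = ((T : ℝ) - ((T % J : ℕ) : ℝ)) / (J : ℝ) := by
    have h := Nat.div_add_mod T J
    have h' : (J : ℝ) * ((T / J : ℕ) : ℝ) + ((T % J : ℕ) : ℝ) = (T : ℝ) := by
      exact_mod_cast congrArg (Nat.cast : ℕ → ℝ) h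
    rw [eq_div_iff (ne_of_gt hJR)]
    linarith
  rw [hcast]
  field_simp
  ring
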